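/- Let A, B, C, D ∈ ℚ[t] have degrees s_a, s_b, s_c, s_d with s_d = s_b + 1, s_b > s_c, s_b ≥ s_a, and suppose d·(leading coeff of D) ≠ (leading coeff of B) for all integers d with 0 < d < 2(s_b − s_c). If x ∈ ℚ((t⁻¹)) solves D x' = A + B x + C x² and deg x ≥ 1, then deg x = s_b − s_c and the leading coefficient of x equals ((s_b − s_c)·(leading coeff of D) − (leading coeff of B)) / (leading coeff of C). -/

import Mathlib

open Polynomial

/-- The formal derivative (with respect to `X`) of a formal Laurent series. -/
noncomputable def lsDeriv {F : Type*} [Field F] (f : LaurentSeries F) : LaurentSeries F where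
  coeff n := (n + 1 : ℤ) * f.coeff (n + 1)
  isPWO_support' := by
    refine ((HahnSeries.single (-1 : ℤ) (1 : F) * f).isPWO_support).mono ?_
    intro n hn
    have hf : f.coeff (n + 1) ≠ 0 := by
      intro h
      apply hn
      simp [h]
    have hcoeff : (HahnSeries.single (-1 : ℤ) (1 : F) * f).coeff n = f.coeff (n + 1) := by
      have := HahnSeries.coeff_single_mul_add (r := (1 : F)) (x := f) (b := (-1 : ℤ)) (a := n + 1)
      simpa using this
    simp only [HahnSeries.mem_support, hcoeff]
    exact hf

/-- `t`, as an element of `ℚ((t⁻¹))`: the field of Laurent series in `X = t⁻¹`,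
so `t = X⁻¹` is the Hahn series with a single coefficient `1` in degree `-1`. -/
noncomputable def lsT : LaurentSeries ℚ := HahnSeries.single (-1 : ℤ) 1

/-- The formal derivative with respect to `t` on `ℚ((t⁻¹))`: since `X = t⁻¹`,
`d/dt = -X² · d/dX`. -/
noncomputable def tDeriv (f : LaurentSeries ℚ) : LaurentSeries ℚ :=
  -(HahnSeries.single (2 : ℤ) (1 : ℚ)) * lsDeriv f

lemma aeval_lsT_coeff (P : Polynomial ℚ) (n : ℤ) :
    (aeval lsT P).coeff n = if 0 ≤ -n then P.coeff (-n).toNat else 0 := by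
  induction P using Polynomial.induction_on' with
  | add p q hp hq =>
      rw [map_add, HahnSeries.coeff_add, hp, hq, Polynomial.coeff_add]
      split <;> simp
  | monomial i a =>
      have halg : (algebraMap ℚ (LaurentSeries ℚ)) a = HahnSeries.single (0:ℤ) a := by
        rw [HahnSeries.algebraMap_apply',
          show (algebraMap ℚ (PowerSeries ℚ)) a = PowerSeries.C a from rfl,
          HahnSeries.ofPowerSeries_C, HahnSeries.C_apply]
      rw [aeval_monomial, halg, lsT, HahnSeries.single_pow, HahnSeries.single_mul_single,
        zero_add, HahnSeries.coeff_single]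
      simp only [Polynomial.coeff_monomial, one_pow, mul_one, smul_neg, nsmul_eq_mul]
      by_cases h : n = -(i:ℤ)
      · subst h; simp
      · rw [if_neg h]
        split
        · rw [if_neg (by omega)]
        · rfl

lemma ls_order_eq {f : LaurentSeries ℚ} {n : ℤ} (h1 : f.coeff n ≠ 0)
    (h2 : ∀ m, m < n → f.coeff m = 0) : f.order = n := by
  have hf : f ≠ 0 := HahnSeries.ne_zero_of_coeff_ne_zero h1
  refine le_antisymm (HahnSeries.order_le_of_coeff_ne_zero h1) ?_
  by_contra h
  exact (show f.coeff f.order ≠ 0 by rw [← HahnSeries.leadingCoeff_eq]; exact HahnSeries.leadingCoeff_ne_zero.mpr hf) (h2 _ (lt_of_not_ge h))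

lemma aeval_lsT_coeff_lead (P : Polynomial ℚ) :
    (aeval lsT P).coeff (-(P.natDegree : ℤ)) = P.leadingCoeff := by
  rw [aeval_lsT_coeff, if_pos (by omega), neg_neg, Int.toNat_natCast, Polynomial.leadingCoeff]

lemma aeval_lsT_coeff_eq_zero (P : Polynomial ℚ) {n : ℤ} (h : n < -(P.natDegree : ℤ)) :
    (aeval lsT P).coeff n = 0 := by
  rw [aeval_lsT_coeff]
  split
  · exact Polynomial.coeff_eq_zero_of_natDegree_lt (by omega)
  · rfl

lemma aeval_lsT_ne_zero {P : Polynomial ℚ} (hP : P ≠ 0) : aeval lsT P ≠ 0 :=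
  HahnSeries.ne_zero_of_coeff_ne_zero (g := -(P.natDegree : ℤ)) (by
    rw [aeval_lsT_coeff_lead]; exact Polynomial.leadingCoeff_ne_zero.mpr hP)

lemma aeval_lsT_order {P : Polynomial ℚ} (hP : P ≠ 0) :
    (aeval lsT P).order = -(P.natDegree : ℤ) :=
  ls_order_eq (by rw [aeval_lsT_coeff_lead]; exact Polynomial.leadingCoeff_ne_zero.mpr hP)
    (fun _ hm => aeval_lsT_coeff_eq_zero P hm)

lemma lsDeriv_coeff (f : LaurentSeries ℚ) (n : ℤ) :
    (lsDeriv f).coeff n = ((n + 1 : ℤ) : ℚ) * f.coeff (n + 1) := rfl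

lemma tDeriv_coeff (f : LaurentSeries ℚ) (m : ℤ) :
    (tDeriv f).coeff m = (1 - m) * f.coeff (m - 1) := by
  have h1 : ((HahnSeries.single (2:ℤ) (1:ℚ)) * lsDeriv f).coeff ((m - 2) + 2)
      = 1 * (lsDeriv f).coeff (m - 2) := HahnSeries.coeff_single_mul_add
  rw [show (m - 2) + 2 = m by ring] at h1
  have h2 : (tDeriv f).coeff m
      = -(((HahnSeries.single (2:ℤ) (1:ℚ)) * lsDeriv f).coeff m) := by
    have h3 := congrArg (fun g : LaurentSeries ℚ => g.coeff m)
      (neg_mul (HahnSeries.single (2:ℤ) (1:ℚ)) (lsDeriv f))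
    rw [tDeriv, h3, HahnSeries.coeff_neg]
  rw [h2, h1, one_mul, lsDeriv_coeff, show m - 2 + 1 = m - 1 by ring]
  push_cast
  ring

lemma mul_coeff_orders (f g : LaurentSeries ℚ) :
    (f * g).coeff (f.order + g.order) = f.coeff f.order * g.coeff g.order := by
  rw [HahnSeries.coeff_mul_order_add_order, HahnSeries.leadingCoeff_eq,
    HahnSeries.leadingCoeff_eq]

lemma mul_coeff_lt {f g : LaurentSeries ℚ} (hf : f ≠ 0) (hg : g ≠ 0) {n : ℤ}
    (hn : n < f.order + g.order) : (f * g).coeff n = 0 :=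
  HahnSeries.coeff_eq_zero_of_lt_order (by rwa [HahnSeries.order_mul hf hg])

/-- Let `A, B, C, D ∈ ℚ[t]` have degrees `s_a, s_b, s_c, s_d` with `s_d = s_b + 1`,
`s_b > s_c`, `s_b ≥ s_a`, and suppose `d·(leading coeff of D) ≠ (leading coeff of B)` for
all integers `d` with `0 < d < 2(s_b − s_c)`. If `x ∈ ℚ((t⁻¹))` solves `D x' = A + B x + C x²`
and `deg x ≥ 1` (degree of a Laurent series being minus its order), then
`deg x = s_b − s_c` and the leading coefficient of `x` (the coefficient of `t^(deg x)`)
equals `((s_b − s_c)·leadingCoeff D − leadingCoeff B) / leadingCoeff C`. -/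
theorem riccati_degree_leading_coeff (A B C D : Polynomial ℚ)
    (hB : B ≠ 0) (hC : C ≠ 0) (hD : D ≠ 0)
    (hdb : D.natDegree = B.natDegree + 1)
    (hbc : C.natDegree < B.natDegree)
    (hba : A.natDegree ≤ B.natDegree)
    (hlead : ∀ d : ℕ, 0 < d → d < 2 * (B.natDegree - C.natDegree) →
      (d : ℚ) * D.leadingCoeff ≠ B.leadingCoeff)
    (x : LaurentSeries ℚ)
    (hx : aeval lsT D * tDeriv x = aeval lsT A + aeval lsT B * x + aeval lsT C * x ^ 2)
    (hdeg : x.order ≤ -1) :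
    -x.order = (B.natDegree : ℤ) - C.natDegree ∧
      x.coeff x.order =
        (((B.natDegree : ℚ) - C.natDegree) * D.leadingCoeff - B.leadingCoeff)
          / C.leadingCoeff := by
  have hx0 : x ≠ 0 := by
    intro h
    rw [h, HahnSeries.order_zero] at hdeg
    omega
  set o := x.order with ho
  set c := x.coeff o with hcdef
  have hc : c ≠ 0 := by
    have := HahnSeries.leadingCoeff_ne_zero.mpr hx0
    rwa [HahnSeries.leadingCoeff_eq, ← ho, ← hcdef] at this
  have hsd : (D.natDegree : ℤ) = (B.natDegree : ℤ) + 1 := by exact_mod_cast hdb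
  have hsbc : (C.natDegree : ℤ) < (B.natDegree : ℤ) := by exact_mod_cast hbc
  have hsba : (A.natDegree : ℤ) ≤ (B.natDegree : ℤ) := by exact_mod_cast hba
  -- derivative facts
  have hyc : ∀ m : ℤ, (tDeriv x).coeff m = (1 - m) * x.coeff (m - 1) := tDeriv_coeff x
  have hytop : (tDeriv x).coeff (o + 1) = -o * c := by
    rw [hyc, show o + 1 - 1 = o by ring, ← hcdef]
    push_cast
    ring
  have hyne : (tDeriv x).coeff (o + 1) ≠ 0 := by
    rw [hytop]
    exact mul_ne_zero (by
      have : (o : ℚ) ≠ 0 := by exact_mod_cast (by omega : o ≠ 0)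
      simpa using this) hc
  have hyorder : (tDeriv x).order = o + 1 := by
    refine ls_order_eq hyne (fun m hm => ?_)
    rw [hyc, HahnSeries.coeff_eq_zero_of_lt_order (show m - 1 < x.order by omega), mul_zero]
  have hy0 : tDeriv x ≠ 0 := HahnSeries.ne_zero_of_coeff_ne_zero hyne
  -- nonzero aevals
  have hBne := aeval_lsT_ne_zero hB
  have hCne := aeval_lsT_ne_zero hC
  have hDne := aeval_lsT_ne_zero hD
  have hDo := aeval_lsT_order hD
  have hBo := aeval_lsT_order hB
  have hCo := aeval_lsT_order hC
  -- square of x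
  have hx2ne : x ^ 2 ≠ 0 := pow_ne_zero 2 hx0
  have hx2o : (x ^ 2).order = o + o := by
    rw [pow_two, HahnSeries.order_mul hx0 hx0, ← ho]
  have hx2c : (x ^ 2).coeff (o + o) = c * c := by
    rw [pow_two]
    have := mul_coeff_orders x x
    rwa [← ho, ← hcdef] at this
  -- key coefficient extraction lemma
  have key : ∀ n : ℤ,
      (aeval lsT D * tDeriv x).coeff n
        = (aeval lsT A).coeff n + (aeval lsT B * x).coeff n + (aeval lsT C * x ^ 2).coeff n := by
    intro n
    rw [hx, HahnSeries.coeff_add, HahnSeries.coeff_add]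
  -- coefficient computations at arbitrary index equal to relevant orders
  have eD : (aeval lsT D * tDeriv x).coeff (o - (B.natDegree : ℤ)) = D.leadingCoeff * (-o * c) := by
    have h0 := mul_coeff_orders (aeval lsT D) (tDeriv x)
    rw [hDo, hyorder, aeval_lsT_coeff_lead, hytop] at h0
    rwa [show -(D.natDegree : ℤ) + (o + 1) = o - (B.natDegree : ℤ) by omega] at h0
  have eB : (aeval lsT B * x).coeff (o - (B.natDegree : ℤ)) = B.leadingCoeff * c := by
    have h0 := mul_coeff_orders (aeval lsT B) x
    rw [hBo, ← ho, aeval_lsT_coeff_lead, ← hcdef] at h0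
    rwa [show -(B.natDegree : ℤ) + o = o - (B.natDegree : ℤ) by omega] at h0
  have eC : (aeval lsT C * x ^ 2).coeff ((o + o) - (C.natDegree : ℤ)) = C.leadingCoeff * (c * c) := by
    have h0 := mul_coeff_orders (aeval lsT C) (x ^ 2)
    rw [hCo, hx2o, aeval_lsT_coeff_lead, hx2c] at h0
    rwa [show -(C.natDegree : ℤ) + (o + o) = (o + o) - (C.natDegree : ℤ) by omega] at h0
  rcases lt_trichotomy (-o) ((B.natDegree : ℤ) - (C.natDegree : ℤ)) with h | h | h
  · -- case d < s_b - s_c : contradiction with hlead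
    exfalso
    have hkey := key (o - (B.natDegree : ℤ))
    rw [eD, eB, aeval_lsT_coeff_eq_zero A (by omega),
      mul_coeff_lt hCne hx2ne (by rw [hCo, hx2o]; omega)] at hkey
    -- D.lead * (-o * c) = 0 + B.lead * c + 0
    have h1 : (-(o:ℚ) * D.leadingCoeff - B.leadingCoeff) * c = 0 := by
      linear_combination hkey
    have heq : -(o:ℚ) * D.leadingCoeff = B.leadingCoeff :=
      sub_eq_zero.mp ((mul_eq_zero.mp h1).resolve_right hc)
    have hq : (((-o).toNat : ℕ) : ℚ) = -(o:ℚ) := by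
      have h2 : ((-o).toNat : ℤ) = -o := Int.toNat_of_nonneg (by omega)
      exact_mod_cast congrArg (fun z : ℤ => (z : ℚ)) h2
    have hlt : (-o).toNat < 2 * (B.natDegree - C.natDegree) := by omega
    refine hlead (-o).toNat (by omega) hlt ?_
    rw [hq]
    exact heq
  · -- case d = s_b - s_c
    have hoo : (o + o) - (C.natDegree : ℤ) = o - (B.natDegree : ℤ) := by omega
    have hkey := key (o - (B.natDegree : ℤ))
    rw [eD, eB, ← hoo, eC, aeval_lsT_coeff_eq_zero A (by omega)] at hkey
    -- D.lead * (-o*c) = 0 + B.lead * c + C.lead * c * c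
    have hCl : C.leadingCoeff ≠ 0 := Polynomial.leadingCoeff_ne_zero.mpr hC
    constructor
    · exact h
    · have hoq : -(o : ℚ) = (B.natDegree : ℚ) - (C.natDegree : ℚ) := by
        have := congrArg (fun z : ℤ => (z : ℚ)) h
        push_cast at this
        exact this
      have h2 : (((B.natDegree : ℚ) - C.natDegree) * D.leadingCoeff - B.leadingCoeff
          - C.leadingCoeff * c) * c = 0 := by
        linear_combination hkey - D.leadingCoeff * c * hoq
      have h3 : ((B.natDegree : ℚ) - C.natDegree) * D.leadingCoeff - B.leadingCoeff
          = C.leadingCoeff * c :=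
        sub_eq_zero.mp ((mul_eq_zero.mp h2).resolve_right hc)
      rw [h3, mul_comm, mul_div_assoc, div_self hCl, mul_one]
  · -- case d > s_b - s_c : contradiction
    exfalso
    have hkey := key ((o + o) - (C.natDegree : ℤ))
    rw [eC, aeval_lsT_coeff_eq_zero A (by omega),
      mul_coeff_lt hDne hy0 (by rw [hDo, hyorder]; omega),
      mul_coeff_lt hBne hx0 (by rw [hBo, ← ho]; omega)] at hkey
    have : C.leadingCoeff * (c * c) = 0 := by linarith [hkey]
    exact absurd this (mul_ne_zero (Polynomial.leadingCoeff_ne_zero.mpr hC) (mul_ne_zero hc hc))
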